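/- Let N ≥ 1, let F ⊆ ℤ^N be a finite set containing a nonzero element, let δ > 0 and let K ⊆ ℤ^N be a finite (F,δ)-invariant set, i.e. |K ∩ ⋂_{g∈F}(K − g)| ≥ (1−δ)|K|. Define ℓ : K → ℕ by ℓ(g) = min{n ≥ 1 : ∃ g₁,…,gₙ ∈ F with g + g₁ + ⋯ + gₙ ∉ K}. Then for every n ≥ 1 one has |ℓ⁻¹(n)| ≤ δ·|F|^{n−1}·|K|, and consequently |ℓ⁻¹({1,2,…,m})| ≤ δ·(1 + |F| + ⋯ + |F|^{m−1})·|K| for every m ≥ 1. -/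
import Mathlib

lemma stmt10_sum_split {V : Type*} [AddCommMonoid V] {m k : ℕ} (h : m = k + 1)
    (gs : Fin m → V) :
    ∑ i, gs i = gs ⟨0, by omega⟩ + ∑ i : Fin k, gs ⟨i.1 + 1, by omega⟩ := by
  subst h
  rw [Fin.sum_univ_succ]
  rfl

theorem stmt10 (N : ℕ) (hN : 1 ≤ N) (F K : Finset (Fin N → ℤ)) (δ : ℝ) (hδ : 0 < δ)
    (hF : ∃ g ∈ F, g ≠ 0)
    (hinv : (1 - δ) * K.card ≤ ((K.filter fun x => ∀ g ∈ F, x + g ∈ K).card : ℝ))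
    (ℓ : (Fin N → ℤ) → ℕ)
    (hℓ : ∀ g ∈ K, 1 ≤ ℓ g ∧
      (∃ gs : Fin (ℓ g) → (Fin N → ℤ), (∀ i, gs i ∈ F) ∧ g + ∑ i, gs i ∉ K) ∧
      (∀ n : ℕ, 1 ≤ n →
        (∃ gs : Fin n → (Fin N → ℤ), (∀ i, gs i ∈ F) ∧ g + ∑ i, gs i ∉ K) → ℓ g ≤ n)) :
    (∀ n : ℕ, 1 ≤ n →
      ((K.filter fun g => ℓ g = n).card : ℝ) ≤ δ * (F.card : ℝ) ^ (n - 1) * K.card) ∧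
    (∀ m : ℕ, 1 ≤ m →
      ((K.filter fun g => ℓ g ≤ m).card : ℝ) ≤
        δ * (∑ i ∈ Finset.range m, (F.card : ℝ) ^ i) * K.card) := by
  classical
  obtain ⟨g0, hg0F, -⟩ := hF
  have hF1 : (1 : ℝ) ≤ F.card := by
    exact_mod_cast Finset.card_pos.mpr ⟨g0, hg0F⟩
  set A : ℕ → Finset (Fin N → ℤ) := fun n => K.filter fun g => ℓ g = n with hAdef
  -- base case
  have hbase : ((A 1).card : ℝ) ≤ δ * K.card := by
    have hsub : A 1 ⊆ K \ (K.filter fun x => ∀ g ∈ F, x + g ∈ K) := by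
      intro g hg
      rw [Finset.mem_filter] at hg
      obtain ⟨hgK, h1⟩ := hg
      obtain ⟨-, ⟨gs, hgsF, hgsK⟩, -⟩ := hℓ g hgK
      rw [Finset.mem_sdiff]
      refine ⟨hgK, fun hmem => ?_⟩
      rw [Finset.mem_filter] at hmem
      have hsp := stmt10_sum_split h1 gs
      simp only [Finset.univ_eq_empty, Finset.sum_empty, add_zero] at hsp
      exact hgsK (by rw [hsp]; exact hmem.2 _ (hgsF _))
    have hcard : ((A 1).card : ℝ) ≤
        (K.card : ℝ) - ((K.filter fun x => ∀ g ∈ F, x + g ∈ K).card : ℝ) := by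
      have h1 := Finset.card_le_card hsub
      have h3 : ((K.filter fun x => ∀ g ∈ F, x + g ∈ K).card : ℝ) ≤ K.card := by
        exact_mod_cast Finset.card_le_card (Finset.filter_subset _ _)
      have h4 : (K \ (K.filter fun x => ∀ g ∈ F, x + g ∈ K)).card
          = K.card - (K.filter fun x => ∀ g ∈ F, x + g ∈ K).card :=
        Finset.card_sdiff_of_subset (Finset.filter_subset _ _)
      have h5 : ((A 1).card : ℕ) ≤ K.card - (K.filter fun x => ∀ g ∈ F, x + g ∈ K).card := by
        rw [← h4]; exact h1
      have h6 : ((A 1).card : ℝ) ≤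
          ((K.card - (K.filter fun x => ∀ g ∈ F, x + g ∈ K).card : ℕ) : ℝ) := by
        exact_mod_cast h5
      rw [Nat.cast_sub (Finset.card_le_card (Finset.filter_subset _ _))] at h6
      exact h6
    nlinarith [hinv]
  -- inductive step
  have hstep : ∀ n : ℕ, 1 ≤ n → ((A (n + 1)).card : ℝ) ≤ F.card * (A n).card := by
    intro n hn
    have key : ∀ g : Fin N → ℤ, ∃ a : Fin N → ℤ, g ∈ A (n + 1) → a ∈ F ∧ g + a ∈ A n := by
      intro g
      by_cases hg : g ∈ A (n + 1)
      swap
      · exact ⟨0, fun h => absurd h hg⟩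
      rw [hAdef, Finset.mem_filter] at hg
      obtain ⟨hgK, hln⟩ := hg
      obtain ⟨-, ⟨gs, hgsF, hgsK⟩, hmin⟩ := hℓ g hgK
      set a : Fin N → ℤ := gs ⟨0, by omega⟩ with ha
      have haF : a ∈ F := hgsF _
      have hsp := stmt10_sum_split hln gs
      -- g + a ∈ K
      have hgaK : g + a ∈ K := by
        by_contra hnot
        have : ℓ g ≤ 1 := by
          apply hmin 1 le_rfl
          refine ⟨fun _ => a, fun _ => haF, ?_⟩
          simpa using hnot
        omega
      obtain ⟨-, ⟨hs, hhsF, hhsK⟩, hmin'⟩ := hℓ (g + a) hgaK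
      -- ℓ (g + a) ≤ n
      have hle : ℓ (g + a) ≤ n := by
        apply hmin' n hn
        refine ⟨fun i => gs ⟨i.1 + 1, by omega⟩, fun i => hgsF _, ?_⟩
        have : g + a + ∑ i : Fin n, gs ⟨i.1 + 1, by omega⟩ = g + ∑ i, gs i := by
          rw [hsp]; ring
        rw [this]; exact hgsK
      -- ℓ (g + a) ≥ n
      have hge : n ≤ ℓ (g + a) := by
        by_contra hlt
        push_neg at hlt
        have : ℓ g ≤ ℓ (g + a) + 1 := by
          apply hmin (ℓ (g + a) + 1) (by omega)
          refine ⟨Fin.cons a hs, ?_, ?_⟩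
          · intro i
            refine Fin.cases ?_ ?_ i
            · simpa using haF
            · intro j; simpa using hhsF j
          · rw [Fin.sum_univ_succ]
            simp only [Fin.cons_zero, Fin.cons_succ]
            have : g + (a + ∑ i : Fin (ℓ (g + a)), hs i) = g + a + ∑ i, hs i := by ring
            rw [this]; exact hhsK
        omega
      refine ⟨a, fun _ => ⟨haF, ?_⟩⟩
      rw [hAdef, Finset.mem_filter]
      exact ⟨hgaK, le_antisymm hle hge⟩
    choose a haP using key
    have hcard : (A (n + 1)).card ≤ (F ×ˢ A n).card := by
      apply Finset.card_le_card_of_injOn (fun g => (a g, g + a g))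
      · intro g hg
        exact Finset.mem_product.mpr ⟨(haP g hg).1, (haP g hg).2⟩
      · intro g hg g' hg' heq
        have h1 : a g = a g' := congrArg Prod.fst heq
        have h2 : g + a g = g' + a g' := congrArg Prod.snd heq
        rw [h1] at h2
        exact add_right_cancel h2
    rw [Finset.card_product] at hcard
    exact_mod_cast hcard
  -- main bound
  have hmain : ∀ n : ℕ, 1 ≤ n → ((A n).card : ℝ) ≤ δ * (F.card : ℝ) ^ (n - 1) * K.card := by
    intro n hn
    induction n with
    | zero => omega
    | succ k ih =>
      rcases Nat.eq_zero_or_pos k with hk | hk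
      · subst hk; simpa using hbase
      · have h1 := hstep k hk
        have h2 := ih hk
        have hnn : (0 : ℝ) ≤ F.card := by linarith
        have h3 : ((A (k + 1)).card : ℝ) ≤ F.card * (δ * (F.card : ℝ) ^ (k - 1) * K.card) :=
          le_trans h1 (by nlinarith)
        have h4 : (F.card : ℝ) * (F.card : ℝ) ^ (k - 1) = (F.card : ℝ) ^ k := by
          rw [← pow_succ']
          congr 1
          omega
        calc ((A (k + 1)).card : ℝ) ≤ F.card * (δ * (F.card : ℝ) ^ (k - 1) * K.card) := h3
          _ = δ * ((F.card : ℝ) * (F.card : ℝ) ^ (k - 1)) * K.card := by ring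
          _ = δ * (F.card : ℝ) ^ (k + 1 - 1) * K.card := by rw [h4]; norm_num
  refine ⟨hmain, ?_⟩
  intro m hm
  have hsub : (K.filter fun g => ℓ g ≤ m) ⊆ (Finset.Icc 1 m).biUnion A := by
    intro g hg
    rw [Finset.mem_filter] at hg
    obtain ⟨hgK, hgm⟩ := hg
    have h1 := (hℓ g hgK).1
    exact Finset.mem_biUnion.mpr
      ⟨ℓ g, Finset.mem_Icc.mpr ⟨h1, hgm⟩, Finset.mem_filter.mpr ⟨hgK, rfl⟩⟩
  have h1 : ((K.filter fun g => ℓ g ≤ m).card : ℝ)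
      ≤ ∑ n ∈ Finset.Icc 1 m, ((A n).card : ℝ) := by
    have h := le_trans (Finset.card_le_card hsub) (Finset.card_biUnion_le)
    exact_mod_cast h
  have h2 : ∑ n ∈ Finset.Icc 1 m, ((A n).card : ℝ)
      ≤ ∑ n ∈ Finset.Icc 1 m, δ * (F.card : ℝ) ^ (n - 1) * K.card :=
    Finset.sum_le_sum fun n hn => hmain n (Finset.mem_Icc.mp hn).1
  have hre : ∑ n ∈ Finset.Icc 1 m, (F.card : ℝ) ^ (n - 1)
      = ∑ i ∈ Finset.range m, (F.card : ℝ) ^ i := by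
    rw [← Finset.Ico_add_one_right_eq_Icc, Finset.sum_Ico_eq_sum_range]
    simp
  have h3 : ∑ n ∈ Finset.Icc 1 m, δ * (F.card : ℝ) ^ (n - 1) * K.card
      = δ * (∑ i ∈ Finset.range m, (F.card : ℝ) ^ i) * K.card := by
    rw [← hre, Finset.mul_sum, Finset.sum_mul]
  linarith
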